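/- Assume Y = K acts on itself by the regular representation, H ≤ Perm(X) is transitive, and the normalizer of H in Perm(X) is the internal semidirect product M ⋉ H for a subgroup M of Perm(X). Then the normalizer N of W = H ≀ K in Perm(Z) is the internal semidirect product (M* · Γ(Aut(K))) ⋉ W: that is, N = M* · Γ(Aut(K)) · W, W is normal in N, and (M* · Γ(Aut(K))) ∩ W = 1; moreover Γ(Aut(K)) ∩ M* = 1, M* centralizes Λ(K), and M* centralizes Γ(Aut(K)), so that M* · Γ(Aut(K)) is isomorphic to M × Aut(K). -/

import Mathlib

open Equiv

/-- The block `X_y = X × {y}` inside `Z = X × Y`. -/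
def block (X Y : Type*) (y : Y) : Set (X × Y) := {p | p.2 = y}

/-- The subgroup `S_Y(Z)` of all permutations of `Z = X × Y` stabilizing every block `X_y`. -/
def blockStab (X Y : Type*) : Subgroup (Perm (X × Y)) where
  carrier := {f | ∀ y : Y, f '' block X Y y = block X Y y}
  one_mem' := by intro y; simp
  mul_mem' := by
    intro f g hf hg y
    have hfg : ⇑(f * g) = ⇑f ∘ ⇑g := rfl
    rw [hfg, Set.image_comp, hg y, hf y]
  inv_mem' := by
    intro f hf y
    have h1 : ⇑f '' block X Y y = block X Y y := hf y
    calc ⇑f⁻¹ '' block X Y y = ⇑f⁻¹ '' (⇑f '' block X Y y) := by rw [h1]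
      _ = block X Y y := by
          rw [← Set.image_comp]
          have h2 : ⇑f⁻¹ ∘ ⇑f = id := by funext p; simp
          rw [h2, Set.image_id]

/-- For `h` a permutation of `X` and `y ∈ Y`, the permutation `h_y` of `Z = X × Y`
acting as `h` on the block `X_y` and fixing everything else. -/
noncomputable def fiberPerm (X Y : Type*) (h : Perm X) (y : Y) : Perm (X × Y) :=
  letI := Classical.decEq Y
  { toFun := fun p => if p.2 = y then (h p.1, p.2) else p
    invFun := fun p => if p.2 = y then (h.symm p.1, p.2) else p
    left_inv := fun p => by
      obtain ⟨x, y'⟩ := p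
      by_cases hp : y' = y <;> simp [hp]
    right_inv := fun p => by
      obtain ⟨x, y'⟩ := p
      by_cases hp : y' = y <;> simp [hp] }

lemma fiberPerm_apply_eq (X Y : Type*) (h : Perm X) (y : Y) (x : X) :
    fiberPerm X Y h y (x, y) = (h x, y) := by
  simp [fiberPerm]

lemma fiberPerm_apply_ne (X Y : Type*) (h : Perm X) (y : Y) (p : X × Y) (hp : p.2 ≠ y) :
    fiberPerm X Y h y p = p := by
  simp [fiberPerm, hp]

/-- The homomorphism `h ↦ h_y`. -/
noncomputable def fiberHom (X Y : Type*) (y : Y) : Perm X →* Perm (X × Y) where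
  toFun h := fiberPerm X Y h y
  map_one' := by
    refine Equiv.ext fun p => ?_
    by_cases hp : p.2 = y
    · obtain ⟨x, y'⟩ := p; subst hp; simp [fiberPerm_apply_eq]
    · simp [fiberPerm_apply_ne _ _ _ _ _ hp]
  map_mul' := by
    intro h1 h2
    refine Equiv.ext fun p => ?_
    by_cases hp : p.2 = y
    · obtain ⟨x, y'⟩ := p
      subst hp
      simp [Perm.mul_apply, fiberPerm_apply_eq]
    · simp [Perm.mul_apply, fiberPerm_apply_ne _ _ _ _ _ hp]

/-- The embedding `Λ` of permutations of `Y` into permutations of `Z = X × Y`,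
`Λ(k)(x,y) = (x, k(y))`. -/
def lamHom (X Y : Type*) : Perm Y →* Perm (X × Y) where
  toFun k := (Equiv.refl X).prodCongr k
  map_one' := Equiv.ext fun p => rfl
  map_mul' := fun k1 k2 => Equiv.ext fun p => rfl

lemma lamHom_apply (X Y : Type*) (k : Perm Y) (x : X) (y : Y) :
    lamHom X Y k (x, y) = (x, k y) := rfl

/-- The base group `B` of the wreath product: all permutations of `Z = X × Y`
stabilizing each block `X_y` and restricting to an element of `H_y` on it. -/
def baseGroup (X Y : Type*) (H : Subgroup (Perm X)) : Subgroup (Perm (X × Y)) where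
  carrier := {f | ∀ y : Y, ∃ h ∈ H, ∀ x : X, f (x, y) = (h x, y)}
  one_mem' := fun y => ⟨1, H.one_mem, fun x => rfl⟩
  mul_mem' := by
    rintro f g hf hg y
    obtain ⟨hg', hgH, hgeq⟩ := hg y
    obtain ⟨hf', hfH, hfeq⟩ := hf y
    refine ⟨hf' * hg', H.mul_mem hfH hgH, fun x => ?_⟩
    have : (f * g) (x, y) = f (g (x, y)) := rfl
    rw [this, hgeq x, hfeq (hg' x)]
    rfl
  inv_mem' := by
    rintro f hf y
    obtain ⟨h, hH, heq⟩ := hf y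
    refine ⟨h⁻¹, H.inv_mem hH, fun x => ?_⟩
    have h1 : f ((h⁻¹ : Perm X) x, y) = (x, y) := by
      rw [heq]
      simp
    calc f⁻¹ (x, y) = f⁻¹ (f ((h⁻¹ : Perm X) x, y)) := by rw [h1]
      _ = ((h⁻¹ : Perm X) x, y) := by simp

lemma mem_baseGroup_iff (X Y : Type*) (H : Subgroup (Perm X)) (f : Perm (X × Y)) :
    f ∈ baseGroup X Y H ↔ ∀ y : Y, ∃ h ∈ H, ∀ x : X, f (x, y) = (h x, y) := Iff.rfl

lemma lam_conj_base (X Y : Type*) {H : Subgroup (Perm X)} (k : Perm Y) {b : Perm (X × Y)}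
    (hb : b ∈ baseGroup X Y H) : (lamHom X Y k)⁻¹ * b * lamHom X Y k ∈ baseGroup X Y H := by
  intro y
  obtain ⟨h, hH, heq⟩ := hb (k y)
  refine ⟨h, hH, fun x => ?_⟩
  have h2 : ((lamHom X Y k)⁻¹ : Perm (X × Y)) (h x, k y) = (h x, y) := by
    have h3 : (lamHom X Y k) (h x, y) = (h x, k y) := rfl
    rw [← h3]
    simp
  calc ((lamHom X Y k)⁻¹ * b * lamHom X Y k) (x, y)
      = (lamHom X Y k)⁻¹ (b ((lamHom X Y k) (x, y))) := rfl
    _ = (lamHom X Y k)⁻¹ (b (x, k y)) := rfl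
    _ = (lamHom X Y k)⁻¹ (h x, k y) := by rw [heq x]
    _ = (h x, y) := h2

/-- The unrestricted wreath product `W = H ≀ K ≤ Perm(X × Y)`, namely the
internal product `Λ(K)·B`. -/
def wreath (X Y : Type*) (H : Subgroup (Perm X)) (K : Subgroup (Perm Y)) :
    Subgroup (Perm (X × Y)) where
  carrier := {w | ∃ k ∈ K, ∃ b ∈ baseGroup X Y H, w = lamHom X Y k * b}
  one_mem' := ⟨1, K.one_mem, 1, (baseGroup X Y H).one_mem, by simp⟩
  mul_mem' := by
    rintro w1 w2 ⟨k1, hk1, b1, hb1, rfl⟩ ⟨k2, hk2, b2, hb2, rfl⟩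
    refine ⟨k1 * k2, K.mul_mem hk1 hk2, ((lamHom X Y k2)⁻¹ * b1 * lamHom X Y k2) * b2,
      (baseGroup X Y H).mul_mem (lam_conj_base X Y k2 hb1) hb2, ?_⟩
    rw [map_mul]
    group
  inv_mem' := by
    rintro w ⟨k, hk, b, hb, rfl⟩
    refine ⟨k⁻¹, K.inv_mem hk, (lamHom X Y k⁻¹)⁻¹ * b⁻¹ * lamHom X Y k⁻¹,
      lam_conj_base X Y k⁻¹ ((baseGroup X Y H).inv_mem hb), ?_⟩
    rw [map_inv]
    group

lemma mem_wreath_iff (X Y : Type*) (H : Subgroup (Perm X)) (K : Subgroup (Perm Y))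
    (w : Perm (X × Y)) :
    w ∈ wreath X Y H K ↔ ∃ k ∈ K, ∃ b ∈ baseGroup X Y H, w = lamHom X Y k * b := Iff.rfl

/-- The image of the (right) regular representation of a group `K` in `Perm K`. -/
def rightRegular (K : Type*) [Group K] : Subgroup (Perm K) where
  carrier := Set.range (fun k : K => Equiv.mulRight k)
  one_mem' := ⟨1, by ext x; simp⟩
  mul_mem' := by
    rintro _ _ ⟨a, rfl⟩ ⟨b, rfl⟩
    exact ⟨b * a, by ext x; simp [mul_assoc]⟩
  inv_mem' := by
    rintro _ ⟨a, rfl⟩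
    exact ⟨a⁻¹, by ext x; simp⟩

/-- The homomorphism `Γ : Aut(K) → Perm(X × K)`, `Γ(γ)(x,k) = (x, γ(k))`. -/
def gammaHom (X K : Type*) [Group K] : MulAut K →* Perm (X × K) where
  toFun γ := (Equiv.refl X).prodCongr γ.toEquiv
  map_one' := Equiv.ext fun p => rfl
  map_mul' := fun γ1 γ2 => Equiv.ext fun p => rfl

lemma gammaHom_apply (X K : Type*) [Group K] (γ : MulAut K) (x : X) (k : K) :
    gammaHom X K γ (x, k) = (x, γ k) := rfl

/-- The homomorphism `m ↦ m*` from `Perm X` to `Perm (X × K)`, `m*(x,k) = (m(x), k)`. -/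
def mstarHom (X K : Type*) : Perm X →* Perm (X × K) where
  toFun m := m.prodCongr (Equiv.refl K)
  map_one' := Equiv.ext fun p => rfl
  map_mul' := fun m1 m2 => Equiv.ext fun p => rfl

lemma mstarHom_apply (X K : Type*) (m : Perm X) (x : X) (k : K) :
    mstarHom X K m (x, k) = (m x, k) := rfl


/-! ### Auxiliary lemmas -/

section Aux

lemma perm_inv_apply_self {α : Type*} (f : Perm α) (x : α) : f⁻¹ (f x) = x :=
  f.symm_apply_apply x

lemma perm_apply_inv_self {α : Type*} (f : Perm α) (x : α) : f (f⁻¹ x) = x :=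
  f.apply_symm_apply x

variable {X K : Type*} [Group K]

lemma mem_wreath_iff'' (H : Subgroup (Perm X)) (w : Perm (X × K)) :
    w ∈ wreath X K H (rightRegular K) ↔
      ∃ k : K, ∃ b ∈ baseGroup X K H, w = lamHom X K (Equiv.mulRight k) * b := by
  rw [mem_wreath_iff]
  constructor
  · rintro ⟨κ, ⟨k, rfl⟩, b, hb, rfl⟩
    exact ⟨k, b, hb, rfl⟩
  · rintro ⟨k, b, hb, rfl⟩
    exact ⟨Equiv.mulRight k, ⟨k, rfl⟩, b, hb, rfl⟩

lemma lam_mem_wreath (H : Subgroup (Perm X)) (k : K) :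
    lamHom X K (Equiv.mulRight k) ∈ wreath X K H (rightRegular K) :=
  (mem_wreath_iff'' H _).mpr ⟨k, 1, (baseGroup X K H).one_mem, (mul_one _).symm⟩

lemma base_mem_wreath {H : Subgroup (Perm X)} {b : Perm (X × K)}
    (hb : b ∈ baseGroup X K H) : b ∈ wreath X K H (rightRegular K) :=
  (mem_wreath_iff'' H _).mpr ⟨1, b, hb, by rw [mulRight_one, map_one, one_mul]⟩

lemma base_apply {H : Subgroup (Perm X)} {b : Perm (X × K)} (hb : b ∈ baseGroup X K H)
    (p : X × K) : ∃ h ∈ H, b p = (h p.1, p.2) := by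
  obtain ⟨h, hh, hc⟩ := (mem_baseGroup_iff X K H b).mp hb p.2
  refine ⟨h, hh, ?_⟩
  conv_lhs => rw [← Prod.mk.eta (p := p)]
  exact hc p.1

lemma base_snd {H : Subgroup (Perm X)} {b : Perm (X × K)} (hb : b ∈ baseGroup X K H)
    (p : X × K) : (b p).2 = p.2 := by
  obtain ⟨h, _, hbp⟩ := base_apply hb p
  rw [hbp]

lemma fiberPerm_mem_base (H : Subgroup (Perm X)) {h : Perm X} (hh : h ∈ H) (y : K) :
    fiberPerm X K h y ∈ baseGroup X K H := by
  intro y'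
  by_cases hy : y' = y
  · subst hy
    exact ⟨h, hh, fun x => fiberPerm_apply_eq X K h y' x⟩
  · exact ⟨1, H.one_mem, fun x => by
      rw [fiberPerm_apply_ne X K h y (x, y') hy]; rfl⟩

/-- Key step: any element of the normalizer of the wreath product maps blocks to blocks. -/
lemma snd_eq_of_normalizer {H : Subgroup (Perm X)}
    (hH : ∀ x x' : X, ∃ h ∈ H, h x = x')
    {α : Perm (X × K)} (hα : α ∈ Subgroup.normalizer (wreath X K H (rightRegular K) : Set (Perm (X × K))))
    (p q : X × K) (hpq : p.2 = q.2) : (α p).2 = (α q).2 := by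
  obtain ⟨x, k⟩ := p
  obtain ⟨x', k'⟩ := q
  simp only at hpq
  subst hpq
  by_cases hK : ∀ k₁ : K, k₁ = k
  · exact (hK _).trans (hK _).symm
  push_neg at hK
  obtain ⟨k₁, hk₁⟩ := hK
  obtain ⟨h, hh, hx⟩ := hH x x'
  have hbW : fiberPerm X K h k ∈ wreath X K H (rightRegular K) :=
    base_mem_wreath (fiberPerm_mem_base H hh k)
  have hw' : α * fiberPerm X K h k * α⁻¹ ∈ wreath X K H (rightRegular K) :=
    (Subgroup.mem_normalizer_iff.mp hα _).mp hbW
  obtain ⟨k₂, b, hb, heq⟩ := (mem_wreath_iff'' H _).mp hw'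
  have hfix : (α * fiberPerm X K h k * α⁻¹) (α (x, k₁)) = α (x, k₁) := by
    simp only [Perm.mul_apply, perm_inv_apply_self]
    rw [fiberPerm_apply_ne X K h k (x, k₁) hk₁]
  have hk₂ : k₂ = 1 := by
    obtain ⟨h₃, _, hbp⟩ := base_apply hb (α (x, k₁))
    have h1 : (α * fiberPerm X K h k * α⁻¹) (α (x, k₁)) =
        (h₃ (α (x, k₁)).1, (α (x, k₁)).2 * k₂) := by
      rw [heq, Perm.mul_apply, hbp]; rfl
    rw [hfix] at h1
    have h2 := congrArg Prod.snd h1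
    simp only at h2
    exact (left_eq_mul.mp h2)
  subst hk₂
  rw [mulRight_one, map_one, one_mul] at heq
  have h2 : α (x', k) = b (α (x, k)) := by
    rw [← heq]
    simp only [Perm.mul_apply, perm_inv_apply_self]
    rw [show fiberPerm X K h k (x, k) = (x', k) from by
      rw [fiberPerm_apply_eq, hx]]
  rw [h2, base_snd hb]

lemma mem_base_of_wreath [Nonempty X] {H : Subgroup (Perm X)} {w : Perm (X × K)}
    (hw : w ∈ wreath X K H (rightRegular K))
    (hsnd : ∀ p : X × K, (w p).2 = p.2) : w ∈ baseGroup X K H := by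
  obtain ⟨k, b, hb, rfl⟩ := (mem_wreath_iff'' H _).mp hw
  have hx₀ : X := Classical.arbitrary X
  have hk : k = 1 := by
    have h1 := hsnd (hx₀, 1)
    obtain ⟨h, _, hbp⟩ := base_apply hb (hx₀, (1 : K))
    rw [Perm.mul_apply, hbp] at h1
    have h2 : (1 : K) * k = 1 := h1
    rwa [one_mul] at h2
  subst hk
  rw [mulRight_one, map_one, one_mul]
  exact hb

lemma conj_base [Nonempty X] {H : Subgroup (Perm X)}
    (hH : ∀ x x' : X, ∃ h ∈ H, h x = x')
    {α : Perm (X × K)} (hα : α ∈ Subgroup.normalizer (wreath X K H (rightRegular K) : Set (Perm (X × K))))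
    {b : Perm (X × K)} (hb : b ∈ baseGroup X K H) :
    α * b * α⁻¹ ∈ baseGroup X K H := by
  refine mem_base_of_wreath
    ((Subgroup.mem_normalizer_iff.mp hα _).mp (base_mem_wreath hb)) (fun p => ?_)
  have h1 : (α * b * α⁻¹) p = α (b (α⁻¹ p)) := rfl
  rw [h1]
  have h2 := snd_eq_of_normalizer hH hα (b (α⁻¹ p)) (α⁻¹ p) (base_snd hb _)
  rw [h2, perm_apply_inv_self]

lemma comp_conj [Nonempty X] {H : Subgroup (Perm X)}
    (hH : ∀ x x' : X, ∃ h ∈ H, h x = x')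
    {α : Perm (X × K)} (hα : α ∈ Subgroup.normalizer (wreath X K H (rightRegular K) : Set (Perm (X × K))))
    (j j' : K) (e : Perm X) (he : ∀ x, α (x, j) = (e x, j'))
    {h : Perm X} (hh : h ∈ H) : e * h * e⁻¹ ∈ H := by
  have hw' : α * fiberPerm X K h j * α⁻¹ ∈ baseGroup X K H :=
    conj_base hH hα (fiberPerm_mem_base H hh j)
  obtain ⟨h', hh', hc⟩ := (mem_baseGroup_iff X K H _).mp hw' j'
  have key : ∀ x, h' (e x) = e (h x) := by
    intro x
    have h1 : (α * fiberPerm X K h j * α⁻¹) (e x, j') = (h' (e x), j') := hc (e x)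
    have h2 : (α * fiberPerm X K h j * α⁻¹) (e x, j') = (e (h x), j') := by
      rw [← he x]
      simp only [Perm.mul_apply, perm_inv_apply_self]
      rw [fiberPerm_apply_eq, he]
    rw [h1] at h2
    exact (congrArg Prod.fst h2)
  have heq : e * h * e⁻¹ = h' := by
    ext x
    simp only [Perm.mul_apply]
    have h3 := key (e⁻¹ x)
    rw [perm_apply_inv_self] at h3
    rw [← h3]
  rw [heq]; exact hh'

/-- The permutation of `X` induced by `α` between the blocks `X_j` and `X_s`. -/
def compPerm (α : Perm (X × K)) (j s : K)
    (h1 : ∀ x : X, (α (x, j)).2 = s) (h2 : ∀ x : X, (α⁻¹ (x, s)).2 = j) : Perm X where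
  toFun x := (α (x, j)).1
  invFun x := (α⁻¹ (x, s)).1
  left_inv x := by
    show (α⁻¹ ((α (x, j)).1, s)).1 = x
    have e1 : ((α (x, j)).1, s) = α (x, j) := by rw [← h1 x]
    rw [e1, perm_inv_apply_self]
  right_inv x := by
    show (α ((α⁻¹ (x, s)).1, j)).1 = x
    have e1 : ((α⁻¹ (x, s)).1, j) = α⁻¹ (x, s) := by rw [← h2 x]
    rw [e1, perm_apply_inv_self]

lemma compPerm_spec (α : Perm (X × K)) (j s : K)
    (h1 : ∀ x : X, (α (x, j)).2 = s) (h2 : ∀ x : X, (α⁻¹ (x, s)).2 = j) (x : X) :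
    α (x, j) = (compPerm α j s h1 h2 x, s) := by
  rw [show compPerm α j s h1 h2 x = (α (x, j)).1 from rfl, ← h1 x]

lemma compPerm_inv_spec (α : Perm (X × K)) (j s : K)
    (h1 : ∀ x : X, (α (x, j)).2 = s) (h2 : ∀ x : X, (α⁻¹ (x, s)).2 = j) (x : X) :
    α⁻¹ (x, s) = ((compPerm α j s h1 h2)⁻¹ x, j) := by
  rw [show (compPerm α j s h1 h2)⁻¹ x = (α⁻¹ (x, s)).1 from rfl, ← h2 x]

/-! #### Conjugation by `m*` and `Γ(γ)` -/

lemma mstar_lam_comm (m : Perm X) (κ : Perm K) :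
    Commute (mstarHom X K m) (lamHom X K κ) := by
  show _ = _
  refine Equiv.ext fun p => rfl

lemma mstar_gamma_comm (m : Perm X) (γ : MulAut K) :
    Commute (mstarHom X K m) (gammaHom X K γ) := by
  show _ = _
  refine Equiv.ext fun p => rfl

lemma mstar_base {H : Subgroup (Perm X)} {m : Perm X} (hm : m ∈ Subgroup.normalizer (H : Set (Perm X)))
    {b : Perm (X × K)} (hb : b ∈ baseGroup X K H) :
    mstarHom X K m * b * (mstarHom X K m)⁻¹ ∈ baseGroup X K H := by
  intro j
  obtain ⟨h, hh, hc⟩ := (mem_baseGroup_iff X K H b).mp hb j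
  refine ⟨m * h * m⁻¹, (Subgroup.mem_normalizer_iff.mp hm h).mp hh, fun x => ?_⟩
  show mstarHom X K m (b ((mstarHom X K m)⁻¹ (x, j))) = _
  rw [show (mstarHom X K m)⁻¹ (x, j) = (m⁻¹ x, j) from rfl, hc (m⁻¹ x)]
  rfl

lemma mstar_conj_W {H : Subgroup (Perm X)} {m : Perm X} (hm : m ∈ Subgroup.normalizer (H : Set (Perm X)))
    {w : Perm (X × K)} (hw : w ∈ wreath X K H (rightRegular K)) :
    mstarHom X K m * w * (mstarHom X K m)⁻¹ ∈ wreath X K H (rightRegular K) := by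
  obtain ⟨k, b, hb, rfl⟩ := (mem_wreath_iff'' H _).mp hw
  refine (mem_wreath_iff'' H _).mpr
    ⟨k, mstarHom X K m * b * (mstarHom X K m)⁻¹, mstar_base hm hb, ?_⟩
  have hc := (mstar_lam_comm (K := K) m (Equiv.mulRight k)).eq
  calc mstarHom X K m * (lamHom X K (Equiv.mulRight k) * b) * (mstarHom X K m)⁻¹
      = (mstarHom X K m * lamHom X K (Equiv.mulRight k)) * (b * (mstarHom X K m)⁻¹) := by
        group
    _ = (lamHom X K (Equiv.mulRight k) * mstarHom X K m) * (b * (mstarHom X K m)⁻¹) := by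
        rw [hc]
    _ = lamHom X K (Equiv.mulRight k) * (mstarHom X K m * b * (mstarHom X K m)⁻¹) := by
        group

lemma mstar_mem_normalizer {H : Subgroup (Perm X)} {m : Perm X} (hm : m ∈ Subgroup.normalizer (H : Set (Perm X))) :
    mstarHom X K m ∈ Subgroup.normalizer (wreath X K H (rightRegular K) : Set (Perm (X × K))) := by
  rw [Subgroup.mem_normalizer_iff]
  intro w
  constructor
  · exact fun hw => mstar_conj_W hm hw
  · intro hw
    have h2 := mstar_conj_W ((Subgroup.normalizer (H : Set (Perm X))).inv_mem hm) hw
    rw [map_inv] at h2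
    have h3 : (mstarHom X K m)⁻¹ * (mstarHom X K m * w * (mstarHom X K m)⁻¹) *
        ((mstarHom X K m)⁻¹)⁻¹ = w := by group
    rwa [h3] at h2

lemma gamma_base {H : Subgroup (Perm X)} (γ : MulAut K)
    {b : Perm (X × K)} (hb : b ∈ baseGroup X K H) :
    gammaHom X K γ * b * (gammaHom X K γ)⁻¹ ∈ baseGroup X K H := by
  intro j
  obtain ⟨h, hh, hc⟩ := (mem_baseGroup_iff X K H b).mp hb (γ⁻¹ j)
  refine ⟨h, hh, fun x => ?_⟩
  show gammaHom X K γ (b ((gammaHom X K γ)⁻¹ (x, j))) = _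
  rw [show (gammaHom X K γ)⁻¹ (x, j) = (x, (γ⁻¹ : MulAut K) j) from rfl, hc x]
  show (h x, γ ((γ⁻¹ : MulAut K) j)) = (h x, j)
  rw [MulAut.apply_inv_self]

lemma gamma_lam (γ : MulAut K) (k : K) :
    gammaHom X K γ * lamHom X K (Equiv.mulRight k) * (gammaHom X K γ)⁻¹ =
      lamHom X K (Equiv.mulRight (γ k)) := by
  refine Equiv.ext fun p => ?_
  obtain ⟨x, j⟩ := p
  show gammaHom X K γ (lamHom X K (Equiv.mulRight k) ((gammaHom X K γ)⁻¹ (x, j))) = _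
  rw [show (gammaHom X K γ)⁻¹ (x, j) = (x, (γ⁻¹ : MulAut K) j) from rfl]
  show (x, γ ((γ⁻¹ : MulAut K) j * k)) = (x, j * γ k)
  rw [map_mul, MulAut.apply_inv_self]

lemma gamma_conj_W {H : Subgroup (Perm X)} (γ : MulAut K)
    {w : Perm (X × K)} (hw : w ∈ wreath X K H (rightRegular K)) :
    gammaHom X K γ * w * (gammaHom X K γ)⁻¹ ∈ wreath X K H (rightRegular K) := by
  obtain ⟨k, b, hb, rfl⟩ := (mem_wreath_iff'' H _).mp hw
  refine (mem_wreath_iff'' H _).mpr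
    ⟨γ k, gammaHom X K γ * b * (gammaHom X K γ)⁻¹, gamma_base γ hb, ?_⟩
  rw [← gamma_lam (X := X) γ k]
  group

lemma gamma_mem_normalizer {H : Subgroup (Perm X)} (γ : MulAut K) :
    gammaHom X K γ ∈ Subgroup.normalizer (wreath X K H (rightRegular K) : Set (Perm (X × K))) := by
  rw [Subgroup.mem_normalizer_iff]
  intro w
  constructor
  · exact fun hw => gamma_conj_W γ hw
  · intro hw
    have h2 := gamma_conj_W γ⁻¹ hw
    rw [map_inv] at h2
    have h3 : (gammaHom X K γ)⁻¹ * (gammaHom X K γ * w * (gammaHom X K γ)⁻¹) *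
        ((gammaHom X K γ)⁻¹)⁻¹ = w := by group
    rwa [h3] at h2

end Aux

/-- The hard direction: each element of the normalizer factors as `m* · Γ(γ) · w`. -/
lemma normalizer_forward {X : Type*} [Nonempty X] {K : Type*} [Group K]
    {H M : Subgroup (Perm X)}
    (hH : ∀ x x' : X, ∃ h ∈ H, h x = x')
    (hNH : ∀ g : Perm X, g ∈ Subgroup.normalizer (H : Set (Perm X)) ↔ ∃ m ∈ M, ∃ h ∈ H, g = m * h)
    (hMH : M ⊓ H = ⊥)
    {α : Perm (X × K)} (hα : α ∈ Subgroup.normalizer (wreath X K H (rightRegular K) : Set (Perm (X × K)))) :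
    ∃ m ∈ M, ∃ γ : MulAut K, ∃ w ∈ wreath X K H (rightRegular K),
      α = mstarHom X K m * gammaHom X K γ * w := by
  have hα' : α⁻¹ ∈ Subgroup.normalizer (wreath X K H (rightRegular K) : Set (Perm (X × K))) :=
    (Subgroup.normalizer (wreath X K H (rightRegular K) : Set (Perm (X × K)))).inv_mem hα
  obtain x₀ : X := Classical.arbitrary X
  -- the block maps of α and α⁻¹
  have hblock : ∀ j : K, ∃ s : K, ∀ x : X, (α (x, j)).2 = s := fun j =>
    ⟨(α (x₀, j)).2, fun x => snd_eq_of_normalizer hH hα (x, j) (x₀, j) rfl⟩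
  choose σ hσ using hblock
  have hblock' : ∀ j : K, ∃ s : K, ∀ x : X, (α⁻¹ (x, j)).2 = s := fun j =>
    ⟨(α⁻¹ (x₀, j)).2, fun x => snd_eq_of_normalizer hH hα' (x, j) (x₀, j) rfl⟩
  choose σ' hσ' using hblock'
  have hinvsnd : ∀ j : K, ∀ x : X, (α⁻¹ (x, σ j)).2 = j := by
    intro j x
    have h2 := snd_eq_of_normalizer hH hα' (x, σ j) (α (x₀, j)) (hσ j x₀).symm
    rw [perm_inv_apply_self] at h2
    exact h2
  have happsnd : ∀ j : K, ∀ x : X, (α (x, σ' j)).2 = j := by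
    intro j x
    have h2 := snd_eq_of_normalizer hH hα (x, σ' j) (α⁻¹ (x₀, j)) (hσ' j x₀).symm
    rw [perm_apply_inv_self] at h2
    exact h2
  have hσσ' : ∀ j, σ' (σ j) = j := fun j => by
    rw [← hσ' (σ j) x₀]; exact hinvsnd j x₀
  have hσ'σ : ∀ j, σ (σ' j) = j := fun j => by
    rw [← hσ (σ' j) x₀]; exact happsnd j x₀
  -- the component permutations of α
  set a : K → Perm X := fun j => compPerm α j (σ j) (hσ j) (hinvsnd j) with ha_def
  have ha : ∀ j x, α (x, j) = (a j x, σ j) := fun j x =>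
    compPerm_spec α j (σ j) (hσ j) (hinvsnd j) x
  have ha' : ∀ j x, α⁻¹ (x, σ j) = ((a j)⁻¹ x, j) := fun j x =>
    compPerm_inv_spec α j (σ j) (hσ j) (hinvsnd j) x
  have aNorm : ∀ j, a j ∈ Subgroup.normalizer (H : Set (Perm X)) := by
    intro j
    rw [Subgroup.mem_normalizer_iff]
    intro h
    constructor
    · intro hh
      exact comp_conj hH hα j (σ j) (a j) (fun x => ha j x) hh
    · intro hh
      have h2 : (a j)⁻¹ * (a j * h * (a j)⁻¹) * ((a j)⁻¹)⁻¹ ∈ H :=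
        comp_conj hH hα' (σ j) j ((a j)⁻¹) (fun x => ha' j x) hh
      have h3 : (a j)⁻¹ * (a j * h * (a j)⁻¹) * ((a j)⁻¹)⁻¹ = h := by group
      rwa [h3] at h2
  -- conjugating the translations
  have hlam : ∀ k : K, ∃ k' : K,
      (∀ j, σ (j * k) = σ j * k') ∧ (∀ j, a (j * k) * (a j)⁻¹ ∈ H) := by
    intro k
    have hmem : α * lamHom X K (Equiv.mulRight k) * α⁻¹ ∈ wreath X K H (rightRegular K) :=
      (Subgroup.mem_normalizer_iff.mp hα _).mp (lam_mem_wreath H k)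
    obtain ⟨k', b, hb, heq⟩ := (mem_wreath_iff'' H _).mp hmem
    have key : ∀ j : K, ∃ h' ∈ H, ∀ x, (a (j * k) x, σ (j * k)) = (h' (a j x), σ j * k') := by
      intro j
      obtain ⟨h', hh', hc⟩ := (mem_baseGroup_iff X K H b).mp hb (σ j)
      refine ⟨h', hh', fun x => ?_⟩
      have e1 : (α * lamHom X K (Equiv.mulRight k) * α⁻¹) (α (x, j)) =
          (a (j * k) x, σ (j * k)) := by
        simp only [Perm.mul_apply, perm_inv_apply_self]
        rw [show lamHom X K (Equiv.mulRight k) (x, j) = (x, j * k) from rfl]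
        exact ha (j * k) x
      have e2 : (α * lamHom X K (Equiv.mulRight k) * α⁻¹) (α (x, j)) =
          (h' (a j x), σ j * k') := by
        rw [heq, Perm.mul_apply, ha j x, hc (a j x)]
        rfl
      rw [← e1, e2]
    refine ⟨k', fun j => ?_, fun j => ?_⟩
    · obtain ⟨h', _, hx⟩ := key j
      exact congrArg Prod.snd (hx x₀)
    · obtain ⟨h', hh', hx⟩ := key j
      have heq2 : a (j * k) * (a j)⁻¹ = h' := by
        ext x
        have h4 := congrArg Prod.fst (hx ((a j)⁻¹ x))
        simp only [Perm.mul_apply] at h4 ⊢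
        rw [h4, perm_apply_inv_self]
      rw [heq2]; exact hh'
  choose τ hτ using hlam
  have hmul : ∀ j k : K, σ (j * k) = σ j * ((σ 1)⁻¹ * σ k) := by
    intro j k
    have h1 := (hτ k).1 j
    have h2 := (hτ k).1 1
    rw [one_mul] at h2
    rw [h1, h2]
    group
  have hcoset : ∀ i j : K, a i * (a j)⁻¹ ∈ H := by
    intro i j
    have h1 := (hτ (j⁻¹ * i)).2 j
    rwa [mul_inv_cancel_left] at h1
  -- extracting the constant M-part
  obtain ⟨m, hmM, hrest⟩ : ∃ m ∈ M, ∀ j : K, m⁻¹ * a j ∈ H := by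
    obtain ⟨m, hmM, h₁, hh₁, he⟩ := (hNH (a 1)).mp (aNorm 1)
    refine ⟨m, hmM, fun j => ?_⟩
    obtain ⟨mj, hmj, hj, hhj, hej⟩ := (hNH (a j)).mp (aNorm j)
    have hu : a j * (a 1)⁻¹ ∈ H := hcoset j 1
    have hmN : m ∈ Subgroup.normalizer (H : Set (Perm X)) := (hNH m).mpr ⟨m, hmM, 1, H.one_mem, (mul_one m).symm⟩
    have h5 : m⁻¹ * (a j * (a 1)⁻¹) * (m⁻¹)⁻¹ ∈ H :=
      (Subgroup.mem_normalizer_iff.mp ((Subgroup.normalizer (H : Set (Perm X))).inv_mem hmN) _).mp hu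
    rw [inv_inv] at h5
    have hkey : m⁻¹ * mj ∈ H := by
      have e : m⁻¹ * mj = (m⁻¹ * (a j * (a 1)⁻¹) * m) * (h₁ * hj⁻¹) := by
        rw [hej, he]; group
      rw [e]
      exact H.mul_mem h5 (H.mul_mem hh₁ (H.inv_mem hhj))
    have hMmem : m⁻¹ * mj ∈ M ⊓ H := ⟨M.mul_mem (M.inv_mem hmM) hmj, hkey⟩
    rw [hMH] at hMmem
    have hmm : mj = m := by
      have := Subgroup.mem_bot.mp hMmem
      exact (inv_mul_eq_one.mp this).symm
    rw [hej, hmm, ← mul_assoc, inv_mul_cancel, one_mul]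
    exact hhj
  -- the automorphism γ
  set γ : MulAut K :=
    { toFun := fun k => σ k * (σ 1)⁻¹
      invFun := fun k => σ' (k * σ 1)
      left_inv := fun k => by
        show σ' (σ k * (σ 1)⁻¹ * σ 1) = k
        rw [inv_mul_cancel_right]
        exact hσσ' k
      right_inv := fun k => by
        show σ (σ' (k * σ 1)) * (σ 1)⁻¹ = k
        rw [hσ'σ]
        exact mul_inv_cancel_right k (σ 1)
      map_mul' := fun j k => by
        show σ (j * k) * (σ 1)⁻¹ = (σ j * (σ 1)⁻¹) * (σ k * (σ 1)⁻¹)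
        rw [hmul j k]
        group } with hγ_def
  have hγ_apply : ∀ k, γ k = σ k * (σ 1)⁻¹ := fun k => rfl
  have hγc : ∀ j : K, (γ⁻¹ : MulAut K) (σ j) = j * (γ⁻¹ : MulAut K) (σ 1) := by
    intro j
    have h1 : γ (j * (γ⁻¹ : MulAut K) (σ 1)) = σ j := by
      rw [map_mul, MulAut.apply_inv_self, hγ_apply]
      exact inv_mul_cancel_right _ _
    rw [← h1, MulAut.inv_apply_self]
  refine ⟨m, hmM, γ, (gammaHom X K γ)⁻¹ * ((mstarHom X K m)⁻¹ * α), ?_, by group⟩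
  have hw : ∀ x j, ((gammaHom X K γ)⁻¹ * ((mstarHom X K m)⁻¹ * α)) (x, j) =
      (m⁻¹ (a j x), j * (γ⁻¹ : MulAut K) (σ 1)) := by
    intro x j
    show (gammaHom X K γ)⁻¹ ((mstarHom X K m)⁻¹ (α (x, j))) = _
    rw [ha j x, ← map_inv (mstarHom X K), ← map_inv (gammaHom X K),
      mstarHom_apply, gammaHom_apply, hγc j]
  refine (mem_wreath_iff'' H _).mpr
    ⟨(γ⁻¹ : MulAut K) (σ 1),
      (lamHom X K (Equiv.mulRight ((γ⁻¹ : MulAut K) (σ 1))))⁻¹ *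
        ((gammaHom X K γ)⁻¹ * ((mstarHom X K m)⁻¹ * α)), ?_, by group⟩
  intro j
  refine ⟨m⁻¹ * a j, hrest j, fun x => ?_⟩
  show (lamHom X K (Equiv.mulRight ((γ⁻¹ : MulAut K) (σ 1))))⁻¹
      (((gammaHom X K γ)⁻¹ * ((mstarHom X K m)⁻¹ * α)) (x, j)) = _
  rw [hw x j, ← map_inv (lamHom X K),
    show (Equiv.mulRight ((γ⁻¹ : MulAut K) (σ 1)))⁻¹ =
      Equiv.mulRight (((γ⁻¹ : MulAut K) (σ 1))⁻¹) from by ext y; simp,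
    show lamHom X K (Equiv.mulRight (((γ⁻¹ : MulAut K) (σ 1))⁻¹))
        (m⁻¹ (a j x), j * (γ⁻¹ : MulAut K) (σ 1)) =
      (m⁻¹ (a j x), j * (γ⁻¹ : MulAut K) (σ 1) * ((γ⁻¹ : MulAut K) (σ 1))⁻¹) from rfl,
    mul_inv_cancel_right]
  rfl

/-- **Lemma G.** Assume `Y = K` regular, `H ≤ Perm X` transitive, and
`N_{Perm X}(H) = M ⋉ H`. Then the normalizer `N` of `W = H ≀ K` in `Perm Z` is the
internal semidirect product `(M*·Γ(Aut K)) ⋉ W`, with `Γ(Aut K) ∩ M* = 1`,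
`[M*, Λ(K)] = 1` and `[M*, Γ(Aut K)] = 1`, so that `M*·Γ(Aut K) ≅ M × Aut(K)`. -/
theorem normalizer_wreath_semidirect {X : Type*} [Nonempty X] (K : Type*) [Group K]
    (H M : Subgroup (Perm X))
    (hH : ∀ x x' : X, ∃ h ∈ H, h x = x')
    (hNH : ∀ g : Perm X, g ∈ Subgroup.normalizer (H : Set (Perm X)) ↔ ∃ m ∈ M, ∃ h ∈ H, g = m * h)
    (hMH : M ⊓ H = ⊥) :
    (∀ α : Perm (X × K), α ∈ Subgroup.normalizer (wreath X K H (rightRegular K) : Set (Perm (X × K))) ↔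
        ∃ m ∈ M, ∃ γ : MulAut K, ∃ w ∈ wreath X K H (rightRegular K),
          α = mstarHom X K m * gammaHom X K γ * w) ∧
    (∀ α ∈ Subgroup.normalizer (wreath X K H (rightRegular K) : Set (Perm (X × K))),
      ∀ w ∈ wreath X K H (rightRegular K), α⁻¹ * w * α ∈ wreath X K H (rightRegular K)) ∧
    (∀ m ∈ M, ∀ γ : MulAut K,
      mstarHom X K m * gammaHom X K γ ∈ wreath X K H (rightRegular K) →
        mstarHom X K m * gammaHom X K γ = 1) ∧
    (∀ m ∈ M, ∀ γ : MulAut K, mstarHom X K m = gammaHom X K γ → mstarHom X K m = 1) ∧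
    (∀ m ∈ M, ∀ k : K, Commute (mstarHom X K m) (lamHom X K (Equiv.mulRight k))) ∧
    (∀ m ∈ M, ∀ γ : MulAut K, Commute (mstarHom X K m) (gammaHom X K γ)) ∧
    Nonempty (↥(Subgroup.map (mstarHom X K) M ⊔ (gammaHom X K).range) ≃* M × MulAut K) := by
  have x₀ : X := Classical.arbitrary X
  refine ⟨?_, ?_, ?_, ?_, ?_, ?_, ?_⟩
  · -- characterization of the normalizer
    intro α
    constructor
    · exact fun hα => normalizer_forward hH hNH hMH hα
    · rintro ⟨m, hm, γ, w, hw, rfl⟩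
      have hmN : m ∈ Subgroup.normalizer (H : Set (Perm X)) := (hNH m).mpr ⟨m, hm, 1, H.one_mem, (mul_one m).symm⟩
      exact Subgroup.mul_mem _
        (Subgroup.mul_mem _ (mstar_mem_normalizer hmN) (gamma_mem_normalizer γ))
        (Subgroup.le_normalizer hw)
  · -- W is normal in its normalizer
    intro α hα w hw
    have h1 := (Subgroup.mem_normalizer_iff.mp
      ((Subgroup.normalizer (wreath X K H (rightRegular K) : Set (Perm (X × K)))).inv_mem hα) w).mp hw
    rwa [inv_inv] at h1
  · -- (M* Γ(Aut K)) ∩ W = 1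
    intro m hm γ hmem
    obtain ⟨k, b, hb, heq⟩ := (mem_wreath_iff'' H _).mp hmem
    have hev : ∀ x : X, ∀ j : K,
        ((m x, γ j) : X × K) = (lamHom X K (Equiv.mulRight k) * b) (x, j) := by
      intro x j
      rw [← heq]
      rfl
    have hev2 : ∀ j : K, ∀ h : Perm X, (∀ x : X, b (x, j) = (h x, j)) →
        ∀ x : X, ((m x, γ j) : X × K) = (h x, j * k) := by
      intro j h hc x
      rw [hev x j, Perm.mul_apply, hc x]
      rfl
    have hk : k = 1 := by
      obtain ⟨h, hh, hc⟩ := (mem_baseGroup_iff X K H b).mp hb 1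
      have h2 := congrArg Prod.snd (hev2 1 h hc x₀)
      simp only at h2
      rw [map_one, one_mul] at h2
      exact h2.symm
    have hγ : γ = 1 := by
      ext j
      obtain ⟨h, hh, hc⟩ := (mem_baseGroup_iff X K H b).mp hb j
      have h2 := congrArg Prod.snd (hev2 j h hc x₀)
      simp only at h2
      rw [hk, mul_one] at h2
      simpa using h2
    have hmH : m ∈ H := by
      obtain ⟨h, hh, hc⟩ := (mem_baseGroup_iff X K H b).mp hb 1
      have hme : m = h := by
        ext x
        have h2 := congrArg Prod.fst (hev2 1 h hc x)
        simpa using h2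
      rw [hme]; exact hh
    have hm1 : m = 1 := by
      have hmm : m ∈ M ⊓ H := ⟨hm, hmH⟩
      rw [hMH] at hmm
      exact Subgroup.mem_bot.mp hmm
    rw [hm1, hγ, map_one, map_one, one_mul]
  · -- Γ(Aut K) ∩ M* = 1
    intro m _ γ he
    have hm1 : m = 1 := by
      ext x
      have h1 := Equiv.ext_iff.mp he (x, (1 : K))
      exact congrArg Prod.fst h1
    rw [hm1, map_one]
  · -- M* centralizes Λ(K)
    exact fun m _ k => mstar_lam_comm m (Equiv.mulRight k)
  · -- M* centralizes Γ(Aut K)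
    exact fun m _ γ => mstar_gamma_comm m γ
  · -- M* Γ(Aut K) ≅ M × Aut K
    refine ⟨?_⟩
    set φ : M × MulAut K →* Perm (X × K) :=
      { toFun := fun p => mstarHom X K (p.1 : Perm X) * gammaHom X K p.2
        map_one' := by simp
        map_mul' := by
          rintro ⟨m₁, γ₁⟩ ⟨m₂, γ₂⟩
          show mstarHom X K ((m₁ : Perm X) * (m₂ : Perm X)) * gammaHom X K (γ₁ * γ₂) = _
          rw [map_mul, map_mul]
          have hc := (mstar_gamma_comm (K := K) (m₂ : Perm X) γ₁).eq
          calc mstarHom X K (m₁ : Perm X) * mstarHom X K (m₂ : Perm X) *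
              (gammaHom X K γ₁ * gammaHom X K γ₂)
              = mstarHom X K (m₁ : Perm X) *
                (mstarHom X K (m₂ : Perm X) * gammaHom X K γ₁) * gammaHom X K γ₂ := by
                group
            _ = mstarHom X K (m₁ : Perm X) *
                (gammaHom X K γ₁ * mstarHom X K (m₂ : Perm X)) * gammaHom X K γ₂ := by
                rw [hc]
            _ = _ := by group } with hφdef
    have hφ_apply : ∀ p : M × MulAut K,
        φ p = mstarHom X K (p.1 : Perm X) * gammaHom X K p.2 := fun p => rfl
    have hinj : Function.Injective φ := by
      intro p q hpq
      obtain ⟨m₁, γ₁⟩ := p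
      obtain ⟨m₂, γ₂⟩ := q
      have hev : ∀ x : X, ∀ j : K, (((m₁ : Perm X) x, γ₁ j) : X × K) =
          ((m₂ : Perm X) x, γ₂ j) := by
        intro x j
        have h1 := Equiv.ext_iff.mp hpq (x, j)
        exact h1
      have hm : m₁ = m₂ := by
        refine Subtype.ext (Equiv.ext fun x => ?_)
        exact congrArg Prod.fst (hev x 1)
      have hγ : γ₁ = γ₂ := by
        ext j
        exact congrArg Prod.snd (hev x₀ j)
      rw [hm, hγ]
    have hrange : φ.range = Subgroup.map (mstarHom X K) M ⊔ (gammaHom X K).range := by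
      apply le_antisymm
      · rintro _ ⟨⟨m, γ⟩, rfl⟩
        rw [hφ_apply]
        exact Subgroup.mul_mem _
          (Subgroup.mem_sup_left ⟨(m : Perm X), m.2, rfl⟩)
          (Subgroup.mem_sup_right ⟨γ, rfl⟩)
      · rw [sup_le_iff]
        constructor
        · rintro _ ⟨m, hm, rfl⟩
          exact ⟨(⟨m, hm⟩, 1), by rw [hφ_apply]; simp⟩
        · rintro _ ⟨γ, rfl⟩
          exact ⟨(1, γ), by rw [hφ_apply]; simp⟩
    exact ((MonoidHom.ofInjective hinj).trans (MulEquiv.subgroupCongr hrange)).symm
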